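/- For every dimension d ≥ 1, every α > 0, every probability measure μ on ℝ^d, every ε > 0 and every N ∈ ℕ, one has the exact identity E ‖μ_N^ε − μ^ε‖_{H^{−α}}² = (1/N)(‖Φ_ε‖_{H^{−α}}² − ‖μ^ε‖_{H^{−α}}²). Moreover, if α > d/2 and ‖μ‖_{H^{−α}} < ∞, the identity also holds for ε = 0, i.e. E ‖μ_N − μ‖_{H^{−α}}² = (1/N)(‖δ₀‖_{H^{−α}}² − ‖μ‖_{H^{−α}}²). -/

import Mathlib

open MeasureTheory ProbabilityTheory Real Filter
open scoped ENNReal Topology Classical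

noncomputable section

abbrev Esp (d : ℕ) := EuclideanSpace ℝ (Fin d)

/-- The heat kernel on `ℝ^d`. -/
def heatK (d : ℕ) (t : ℝ) (x : Esp d) : ℝ :=
  (4 * π * t) ^ (-(d : ℝ) / 2) * Real.exp (-‖x‖ ^ 2 / (4 * t))

/-- The `H^{-α}` norm. -/
def hNorm (d : ℕ) (α : ℝ) (u : ℝ → Esp d → ℝ) : ℝ≥0∞ :=
  (∫⁻ t in Set.Ioc (0:ℝ) 1, ENNReal.ofReal (t ^ (α - 1)) *
      ∫⁻ x, ENNReal.ofReal ((u t x) ^ 2)) ^ ((1 : ℝ) / 2)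

/-- Heat evolution of `Φ_ε` (of `δ₀` when `ε = 0`): `Φ_ε * Φ_t = Φ_{t+ε}`. -/
def phiEvol (d : ℕ) (ε : ℝ) : ℝ → Esp d → ℝ := fun t x => heatK d (t + ε) x

/-- Heat evolution of `μ^ε = μ * Φ_ε` (of `μ` when `ε = 0`). -/
def measEvol (d : ℕ) (μ : Measure (Esp d)) (ε : ℝ) : ℝ → Esp d → ℝ :=
  fun t x => ∫ y, heatK d (t + ε) (x - y) ∂μ

/-- Heat evolution of `μ_N^ε` (of the empirical measure `μ_N` when `ε = 0`),
for the sample `Y 0, …, Y (N-1)`. -/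
def empEvol (d N : ℕ) (Y : Fin N → Esp d) (ε : ℝ) : ℝ → Esp d → ℝ :=
  fun t x => (N : ℝ)⁻¹ * ∑ i, heatK d (t + ε) (x - Y i)

/-- Heat evolution of `μ_N^ε - μ^ε`. -/
def empDiff (d N : ℕ) (μ : Measure (Esp d)) (Y : Fin N → Esp d) (ε : ℝ) : ℝ → Esp d → ℝ :=
  fun t x => empEvol d N Y ε t x - measEvol d μ ε t x

/-! ### Auxiliary definitions -/

def wfun (α : ℝ) (t : ℝ) : ℝ≥0∞ := ENNReal.ofReal (t ^ (α - 1))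

def Qfun (d : ℕ) (ε : ℝ) (t : ℝ) : ℝ≥0∞ := ∫⁻ x, ENNReal.ofReal ((phiEvol d ε t x) ^ 2)

def Mfun (d : ℕ) (μ : Measure (Esp d)) (ε : ℝ) (t : ℝ) : ℝ≥0∞ :=
  ∫⁻ x, ENNReal.ofReal ((measEvol d μ ε t x) ^ 2)

def Gfun (d N : ℕ) (μ : Measure (Esp d)) (Y : Fin N → Esp d) (ε : ℝ) (t : ℝ) : ℝ≥0∞ :=
  ∫⁻ x, ENNReal.ofReal ((empDiff d N μ Y ε t x) ^ 2)

/-! ### Heat kernel facts -/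

lemma heatK_pos {d : ℕ} {s : ℝ} (hs : 0 < s) (x : Esp d) : 0 < heatK d s x := by
  have h4 : 0 < 4 * π * s := by positivity
  exact mul_pos (Real.rpow_pos_of_pos h4 _) (Real.exp_pos _)

lemma heatK_le {d : ℕ} {s : ℝ} (hs : 0 < s) (x : Esp d) :
    heatK d s x ≤ (4 * π * s) ^ (-(d : ℝ) / 2) := by
  have h4 : 0 < 4 * π * s := by positivity
  have hexp : Real.exp (-‖x‖ ^ 2 / (4 * s)) ≤ 1 := by
    rw [Real.exp_le_one_iff]
    apply div_nonpos_of_nonpos_of_nonneg (neg_nonpos.2 (by positivity)) (by positivity)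
  calc heatK d s x ≤ (4 * π * s) ^ (-(d : ℝ) / 2) * 1 :=
        mul_le_mul_of_nonneg_left hexp (le_of_lt (Real.rpow_pos_of_pos h4 _))
    _ = _ := mul_one _

lemma heatK_abs_le {d : ℕ} {s : ℝ} (hs : 0 < s) (x : Esp d) :
    |heatK d s x| ≤ (4 * π * s) ^ (-(d : ℝ) / 2) := by
  rw [abs_of_pos (heatK_pos hs x)]; exact heatK_le hs x

lemma measurable_rpow_const (c : ℝ) : Measurable fun x : ℝ => x ^ c := by
  have h : (fun x : ℝ => x ^ c) = fun x =>
      if x = 0 then (0:ℝ) ^ c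
      else if 0 < x then Real.exp (Real.log x * c)
      else Real.exp (Real.log x * c) * Real.cos (c * π) := by
    funext x
    split_ifs with h1 h2
    · rw [h1]
    · exact Real.rpow_def_of_pos h2 c
    · exact Real.rpow_def_of_neg (lt_of_le_of_ne (not_lt.1 h2) h1) c
  rw [h]
  refine Measurable.ite (measurableSet_eq) measurable_const ?_
  refine Measurable.ite (measurableSet_lt measurable_const measurable_id) ?_ ?_
  · exact (Real.measurable_log.mul_const c).exp
  · exact ((Real.measurable_log.mul_const c).exp).mul_const _

lemma measurable_heatK_prod (d : ℕ) :
    Measurable (fun p : ℝ × Esp d => heatK d p.1 p.2) := by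
  apply Measurable.mul
  · exact (measurable_rpow_const (-(d:ℝ)/2)).comp (measurable_const.mul measurable_fst)
  · exact ((((measurable_norm.comp measurable_snd).pow_const 2).neg).div
      (measurable_const.mul measurable_fst)).exp

lemma measurable_heatK (d : ℕ) (s : ℝ) : Measurable (heatK d s) :=
  (measurable_heatK_prod d).comp (measurable_const.prodMk measurable_id)

lemma integrable_heatK {d : ℕ} {s : ℝ} (hs : 0 < s) :
    Integrable (heatK d s) := by
  have hb : (0:ℝ) < 1 / (4 * s) := by positivity
  have h := (GaussianFourier.integrable_cexp_neg_mul_sq_norm_add (V := Esp d)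
    (b := ((1/(4*s) : ℝ) : ℂ)) (by simpa using hb) 0 0).norm
  have h2 : Integrable (fun v : Esp d => Real.exp (-‖v‖^2 / (4*s))) := by
    refine h.congr (Eventually.of_forall fun v => ?_)
    simp only [Complex.norm_exp]
    congr 1
    simp [Complex.add_re, Complex.mul_re, ← Complex.ofReal_pow]
    ring
  exact h2.const_mul _

lemma integral_heatK {d : ℕ} {s : ℝ} (hs : 0 < s) :
    ∫ x, heatK d s x = 1 := by
  have hb : (0:ℝ) < 1 / (4 * s) := by positivity
  have h := GaussianFourier.integral_rexp_neg_mul_sq_norm (V := Esp d) hb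
  rw [finrank_euclideanSpace_fin] at h
  have heq : ∀ x : Esp d, heatK d s x
      = (4 * π * s) ^ (-(d : ℝ) / 2) * Real.exp (-(1/(4*s)) * ‖x‖^2) := by
    intro x; unfold heatK; congr 1; congr 1; ring
  have h4 : 0 < 4 * π * s := by positivity
  rw [show (fun x : Esp d => heatK d s x) = _ from funext heq, integral_const_mul, h,
    show π / (1/(4*s)) = 4 * π * s by field_simp, ← Real.rpow_add h4,
    show -(d:ℝ)/2 + (d:ℝ)/2 = 0 by ring, Real.rpow_zero]

lemma lintegral_heatK {d : ℕ} {s : ℝ} (hs : 0 < s) :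
    ∫⁻ x, ENNReal.ofReal (heatK d s x) = 1 := by
  rw [← ofReal_integral_eq_lintegral_ofReal (integrable_heatK hs)
    (ae_of_all _ fun x => (heatK_pos hs x).le), integral_heatK hs, ENNReal.ofReal_one]

/-! ### Probability facts -/

lemma memLp_two_of_bound {α : Type*} [MeasurableSpace α] (μ : Measure α) [IsProbabilityMeasure μ]
    {g : α → ℝ} (hg : AEStronglyMeasurable g μ) (C : ℝ) (hb : ∀ x, |g x| ≤ C) :
    MemLp g 2 μ :=
  (memLp_top_of_bound hg C (ae_of_all _ hb)).mono_exponent le_top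

lemma integrable_of_bound {α : Type*} [MeasurableSpace α] (μ : Measure α) [IsProbabilityMeasure μ]
    {g : α → ℝ} (hg : AEStronglyMeasurable g μ) (C : ℝ) (hb : ∀ x, |g x| ≤ C) :
    Integrable g μ :=
  (memLp_two_of_bound μ hg C hb).integrable one_le_two

lemma sq_integral_le {α : Type*} [MeasurableSpace α] (μ : Measure α) [IsProbabilityMeasure μ]
    {g : α → ℝ} (hg : AEStronglyMeasurable g μ) (C : ℝ) (hb : ∀ x, |g x| ≤ C) :
    (∫ y, g y ∂μ) ^ 2 ≤ ∫ y, (g y) ^ 2 ∂μ := by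
  have h2 := memLp_two_of_bound μ hg C hb
  have hv := variance_nonneg g μ
  rw [variance_eq_sub h2] at hv
  simp only [Pi.pow_apply] at hv
  linarith

lemma pointwise_var
    {Ω : Type} [MeasurableSpace Ω] (P : Measure Ω) [IsProbabilityMeasure P]
    {α : Type*} [MeasurableSpace α] (μ : Measure α) [IsProbabilityMeasure μ]
    {N : ℕ} (hN : 0 < N) (X : Fin N → Ω → α)
    (hXm : ∀ i, Measurable (X i)) (hXlaw : ∀ i, Measure.map (X i) P = μ)
    (hXind : iIndepFun X P)
    (g : α → ℝ) (hg : Measurable g) (C : ℝ) (hb : ∀ y, |g y| ≤ C) :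
    ∫⁻ ω, ENNReal.ofReal (((N:ℝ)⁻¹ * ∑ i, g (X i ω) - ∫ y, g y ∂μ)^2) ∂P
      = ENNReal.ofReal ((N:ℝ)⁻¹ * (∫ y, (g y)^2 ∂μ - (∫ y, g y ∂μ)^2)) := by
  have hNR : (N:ℝ) ≠ 0 := Nat.cast_ne_zero.2 hN.ne'
  set m : ℝ := ∫ y, g y ∂μ with hm
  set G : Fin N → Ω → ℝ := fun i ω => g (X i ω) with hG
  have hGm : ∀ i, Measurable (G i) := fun i => hg.comp (hXm i)
  have hGL : ∀ i, MemLp (G i) 2 P :=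
    fun i => memLp_two_of_bound P (hGm i).aestronglyMeasurable C (fun ω => hb _)
  have hEG : ∀ i, ∫ ω, G i ω ∂P = m := by
    intro i
    rw [hm, ← hXlaw i, integral_map (hXm i).aemeasurable hg.aestronglyMeasurable]
  have hEG2 : ∀ i, ∫ ω, (G i ω)^2 ∂P = ∫ y, (g y)^2 ∂μ := by
    intro i
    rw [← hXlaw i, integral_map (hXm i).aemeasurable (hg.pow_const 2).aestronglyMeasurable]
  set V : Ω → ℝ := fun ω => (N:ℝ)⁻¹ * (∑ i, G i) ω with hV
  have hVL : MemLp V 2 P := (memLp_finset_sum' _ (fun i _ => hGL i)).const_mul _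
  have hEV : ∫ ω, V ω ∂P = m := by
    rw [hV]
    simp only [Finset.sum_apply]
    rw [integral_const_mul, integral_finset_sum _ (fun i _ => (hGL i).integrable one_le_two)]
    simp [hEG, Finset.sum_const, hm]
    field_simp
  have hvarG : ∀ i, variance (G i) P = (∫ y, (g y)^2 ∂μ) - m^2 := by
    intro i
    rw [variance_eq_sub (hGL i)]
    simp only [Pi.pow_apply]
    rw [hEG i, hEG2 i]
  have hvar : variance V P = (N:ℝ)⁻¹ * ((∫ y, (g y)^2 ∂μ) - m^2) := by
    have h1 : variance V P = ((N:ℝ)⁻¹)^2 * variance (∑ i, G i) P := by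
      rw [hV]
      exact variance_const_mul _ _ _
    have h2 : variance (∑ i, G i) P = ∑ i : Fin N, variance (G i) P := by
      apply IndepFun.variance_sum (fun i _ => hGL i)
      intro i _ j _ hij
      exact (hXind.indepFun hij).comp hg hg
    rw [h1, h2]
    simp only [hvarG, Finset.sum_const, Finset.card_univ, Fintype.card_fin, nsmul_eq_mul]
    rw [sq]
    field_simp
  have hS2 : ∫ ω, (V ω - m)^2 ∂P = variance V P := by
    rw [variance_eq_integral hVL.aemeasurable, hEV]
  have hint : ∀ ω, (N:ℝ)⁻¹ * ∑ i, g (X i ω) - m = V ω - m := by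
    intro ω
    simp [hV, hG, Finset.sum_apply]
  have hI : Integrable (fun ω => (V ω - m)^2) P :=
    (hVL.sub (memLp_const m)).integrable_sq
  calc ∫⁻ ω, ENNReal.ofReal (((N:ℝ)⁻¹ * ∑ i, g (X i ω) - m)^2) ∂P
      = ∫⁻ ω, ENNReal.ofReal ((V ω - m)^2) ∂P := by
        congr 1; funext ω; rw [hint ω]
    _ = ENNReal.ofReal (∫ ω, (V ω - m)^2 ∂P) :=
        (ofReal_integral_eq_lintegral_ofReal hI (ae_of_all _ fun ω => sq_nonneg _)).symm
    _ = _ := by rw [hS2, hvar]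

/-! ### Measurability of the evolved measure -/

lemma measurable_measEvol_prod (d : ℕ) (μ : Measure (Esp d)) [IsProbabilityMeasure μ] (ε : ℝ) :
    Measurable (fun p : ℝ × Esp d => measEvol d μ ε p.1 p.2) := by
  simp only [measEvol]
  apply (StronglyMeasurable.integral_prod_right'
    (f := fun q : (ℝ × Esp d) × Esp d => heatK d (q.1.1 + ε) (q.1.2 - q.2)) ?_).measurable
  exact ((measurable_heatK_prod d).comp
    (((measurable_fst.fst.add_const ε)).prodMk (measurable_fst.snd.sub measurable_snd))).stronglyMeasurable

/-! ### Key step A -/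

lemma keyA (d : ℕ) {N : ℕ} (hN : 0 < N)
    (μ : Measure (Esp d)) [IsProbabilityMeasure μ]
    (Ω : Type) [MeasurableSpace Ω] (P : Measure Ω) [IsProbabilityMeasure P]
    (X : Fin N → Ω → Esp d)
    (hXm : ∀ i, Measurable (X i)) (hXlaw : ∀ i, Measure.map (X i) P = μ)
    (hXind : iIndepFun X P)
    (ε : ℝ) (hε : 0 ≤ ε) {t : ℝ} (ht : 0 < t) :
    (∫⁻ ω, Gfun d N μ (fun i => X i ω) ε t ∂P)
      = (N:ℝ≥0∞)⁻¹ * (Qfun d ε t - Mfun d μ ε t) ∧ Mfun d μ ε t ≤ Qfun d ε t := by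
  have hs : 0 < t + ε := by linarith
  set C : ℝ := (4 * π * (t+ε)) ^ (-(d:ℝ)/2) with hCdef
  have hC : 0 < C := Real.rpow_pos_of_pos (by positivity) _
  have hk := measurable_heatK d (t+ε)
  have habs : ∀ z : Esp d, |heatK d (t+ε) z| ≤ C := fun z => heatK_abs_le hs z
  have hgm : ∀ x : Esp d, Measurable fun y : Esp d => heatK d (t+ε) (x - y) :=
    fun x => hk.comp (measurable_const.sub measurable_id)
  have hgint : ∀ x, Integrable (fun y => heatK d (t+ε) (x-y)) μ :=
    fun x => integrable_of_bound μ (hgm x).aestronglyMeasurable C (fun y => habs _)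
  have habs2 : ∀ z : Esp d, |(heatK d (t+ε) z)^2| ≤ C^2 := by
    intro z
    rw [abs_pow]
    exact pow_le_pow_left₀ (abs_nonneg _) (habs z) 2
  have hg2int : ∀ x, Integrable (fun y => (heatK d (t+ε) (x-y))^2) μ := fun x =>
    integrable_of_bound μ ((hgm x).pow_const 2).aestronglyMeasurable (C^2) (fun y => habs2 _)
  have hJ : ∀ x : Esp d, (∫ y, heatK d (t+ε) (x-y) ∂μ)^2 ≤ ∫ y, (heatK d (t+ε) (x-y))^2 ∂μ :=
    fun x => sq_integral_le μ (hgm x).aestronglyMeasurable C (fun y => habs _)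
  have hmnn : ∀ x : Esp d, 0 ≤ ∫ y, heatK d (t+ε) (x-y) ∂μ := fun x =>
    integral_nonneg fun y => (heatK_pos hs _).le
  have hmle : ∀ x : Esp d, ∫ y, heatK d (t+ε) (x-y) ∂μ ≤ C := by
    intro x
    calc ∫ y, heatK d (t+ε) (x-y) ∂μ ≤ ∫ _, C ∂μ :=
          integral_mono (hgint x) (integrable_const C) (fun y => (le_abs_self _).trans (habs _))
      _ = C := by simp
  have hmxm : Measurable fun x : Esp d => ∫ y, heatK d (t+ε) (x-y) ∂μ := by
    apply (StronglyMeasurable.integral_prod_right'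
      (f := fun q : Esp d × Esp d => heatK d (t+ε) (q.1 - q.2)) ?_).measurable
    exact (hk.comp (measurable_fst.sub measurable_snd)).stronglyMeasurable
  have hqxm : Measurable fun x : Esp d => ∫ y, (heatK d (t+ε) (x-y))^2 ∂μ := by
    apply (StronglyMeasurable.integral_prod_right'
      (f := fun q : Esp d × Esp d => (heatK d (t+ε) (q.1 - q.2))^2) ?_).measurable
    exact ((hk.comp (measurable_fst.sub measurable_snd)).pow_const 2).stronglyMeasurable
  -- ∫⁻ x, ofReal (m x) = 1
  have hmint : ∫⁻ x, ENNReal.ofReal (∫ y, heatK d (t+ε) (x-y) ∂μ) = 1 := by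
    have h1 : ∀ x : Esp d, ENNReal.ofReal (∫ y, heatK d (t+ε) (x-y) ∂μ)
        = ∫⁻ y, ENNReal.ofReal (heatK d (t+ε) (x-y)) ∂μ := fun x =>
      ofReal_integral_eq_lintegral_ofReal (hgint x) (ae_of_all _ fun y => (heatK_pos hs _).le)
    simp_rw [h1]
    rw [lintegral_lintegral_swap]
    · simp_rw [lintegral_sub_right_eq_self (fun z : Esp d => ENNReal.ofReal (heatK d (t+ε) z)) _,
        lintegral_heatK hs]
      simp
    · exact ((hk.comp (measurable_fst.sub measurable_snd)).ennreal_ofReal).aemeasurable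
  -- ∫⁻ x, ofReal (q x) = Qfun
  have hqint : ∫⁻ x, ENNReal.ofReal (∫ y, (heatK d (t+ε) (x-y))^2 ∂μ) = Qfun d ε t := by
    have h1 : ∀ x : Esp d, ENNReal.ofReal (∫ y, (heatK d (t+ε) (x-y))^2 ∂μ)
        = ∫⁻ y, ENNReal.ofReal ((heatK d (t+ε) (x-y))^2) ∂μ := fun x =>
      ofReal_integral_eq_lintegral_ofReal (hg2int x) (ae_of_all _ fun y => sq_nonneg _)
    simp_rw [h1]
    rw [lintegral_lintegral_swap]
    · simp_rw [lintegral_sub_right_eq_self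
        (fun z : Esp d => ENNReal.ofReal ((heatK d (t+ε) z)^2)) _]
      simp [Qfun, phiEvol, lintegral_const]
    · exact (((hk.comp (measurable_fst.sub measurable_snd)).pow_const 2).ennreal_ofReal).aemeasurable
  have hMeq : Mfun d μ ε t = ∫⁻ x, ENNReal.ofReal ((∫ y, heatK d (t+ε) (x-y) ∂μ)^2) := rfl
  have hMle : Mfun d μ ε t ≤ Qfun d ε t := by
    rw [hMeq, ← hqint]
    exact lintegral_mono fun x => ENNReal.ofReal_le_ofReal (hJ x)
  have hMfin : Mfun d μ ε t ≠ ⊤ := by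
    have hle : Mfun d μ ε t ≤ ENNReal.ofReal C * 1 := by
      rw [hMeq, ← hmint, ← lintegral_const_mul' _ _ ENNReal.ofReal_ne_top]
      apply lintegral_mono
      intro x
      dsimp only
      rw [← ENNReal.ofReal_mul hC.le]
      apply ENNReal.ofReal_le_ofReal
      rw [sq]
      exact mul_le_mul_of_nonneg_right (hmle x) (hmnn x)
    exact ne_top_of_le_ne_top (by simp) hle
  refine ⟨?_, hMle⟩
  -- swap ω and x
  have hDmeas : Measurable fun q : Ω × Esp d =>
      ENNReal.ofReal ((empDiff d N μ (fun i => X i q.1) ε t q.2)^2) := by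
    simp only [empDiff, empEvol, measEvol]
    apply Measurable.ennreal_ofReal
    apply Measurable.pow_const
    apply Measurable.sub
    · apply Measurable.const_mul
      apply Finset.measurable_sum
      intro i _
      exact hk.comp (measurable_snd.sub ((hXm i).comp measurable_fst))
    · exact hmxm.comp measurable_snd
  have hswapΩ : (∫⁻ ω, Gfun d N μ (fun i => X i ω) ε t ∂P)
      = ∫⁻ x, ∫⁻ ω, ENNReal.ofReal ((empDiff d N μ (fun i => X i ω) ε t x)^2) ∂P := by
    simp only [Gfun]
    exact lintegral_lintegral_swap hDmeas.aemeasurable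
  rw [hswapΩ]
  have hpoint : ∀ x : Esp d, (∫⁻ ω, ENNReal.ofReal ((empDiff d N μ (fun i => X i ω) ε t x)^2) ∂P)
      = ENNReal.ofReal ((N:ℝ)⁻¹ * ((∫ y, (heatK d (t+ε) (x-y))^2 ∂μ)
          - (∫ y, heatK d (t+ε) (x-y) ∂μ)^2)) := by
    intro x
    have h := pointwise_var P μ hN X hXm hXlaw hXind
      (fun y => heatK d (t+ε) (x - y)) (hgm x) C (fun y => habs _)
    simpa [empDiff, empEvol, measEvol] using h
  simp_rw [hpoint]
  have hNinv : ENNReal.ofReal ((N:ℝ)⁻¹) = (N:ℝ≥0∞)⁻¹ := by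
    rw [ENNReal.ofReal_inv_of_pos (by exact_mod_cast hN), ENNReal.ofReal_natCast]
  have hNtop : ((N:ℝ≥0∞))⁻¹ ≠ ⊤ := ENNReal.inv_ne_top.2 (by exact_mod_cast hN.ne')
  calc ∫⁻ x, ENNReal.ofReal ((N:ℝ)⁻¹ * ((∫ y, (heatK d (t+ε) (x-y))^2 ∂μ)
          - (∫ y, heatK d (t+ε) (x-y) ∂μ)^2))
      = ∫⁻ x, (N:ℝ≥0∞)⁻¹ * (ENNReal.ofReal (∫ y, (heatK d (t+ε) (x-y))^2 ∂μ)
          - ENNReal.ofReal ((∫ y, heatK d (t+ε) (x-y) ∂μ)^2)) := by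
        congr 1; funext x
        rw [ENNReal.ofReal_mul (inv_nonneg.2 (Nat.cast_nonneg N)), hNinv,
          ENNReal.ofReal_sub _ (sq_nonneg _)]
    _ = (N:ℝ≥0∞)⁻¹ * ∫⁻ x, (ENNReal.ofReal (∫ y, (heatK d (t+ε) (x-y))^2 ∂μ)
          - ENNReal.ofReal ((∫ y, heatK d (t+ε) (x-y) ∂μ)^2)) :=
        lintegral_const_mul' _ _ hNtop
    _ = (N:ℝ≥0∞)⁻¹ * ((∫⁻ x, ENNReal.ofReal (∫ y, (heatK d (t+ε) (x-y))^2 ∂μ))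
          - ∫⁻ x, ENNReal.ofReal ((∫ y, heatK d (t+ε) (x-y) ∂μ)^2)) := by
        congr 1
        apply lintegral_sub ((hmxm.pow_const 2).ennreal_ofReal)
        · rw [← hMeq]; exact hMfin
        · exact ae_of_all _ fun x => ENNReal.ofReal_le_ofReal (hJ x)
    _ = (N:ℝ≥0∞)⁻¹ * (Qfun d ε t - Mfun d μ ε t) := by rw [hqint, ← hMeq]

/-! ### Core identity -/

lemma Mfun_measurable (d : ℕ) (μ : Measure (Esp d)) [IsProbabilityMeasure μ] (ε : ℝ) :
    Measurable fun t => Mfun d μ ε t := by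
  simp only [Mfun]
  exact Measurable.lintegral_prod_right'
    (((measurable_measEvol_prod d μ ε).pow_const 2).ennreal_ofReal)

lemma core (d : ℕ) {N : ℕ} (hN : 0 < N) (α : ℝ)
    (μ : Measure (Esp d)) [IsProbabilityMeasure μ]
    (Ω : Type) [MeasurableSpace Ω] (P : Measure Ω) [IsProbabilityMeasure P]
    (X : Fin N → Ω → Esp d)
    (hXm : ∀ i, Measurable (X i)) (hXlaw : ∀ i, Measure.map (X i) P = μ)
    (hXind : iIndepFun X P)
    (ε : ℝ) (hε : 0 ≤ ε)
    (hB : (∫⁻ t in Set.Ioc (0:ℝ) 1, wfun α t * Mfun d μ ε t) ≠ ⊤) :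
    (∫⁻ ω, (∫⁻ t in Set.Ioc (0:ℝ) 1, wfun α t * Gfun d N μ (fun i => X i ω) ε t) ∂P)
      = (N:ℝ≥0∞)⁻¹ * ((∫⁻ t in Set.Ioc (0:ℝ) 1, wfun α t * Qfun d ε t)
          - ∫⁻ t in Set.Ioc (0:ℝ) 1, wfun α t * Mfun d μ ε t) := by
  have hNtop : ((N:ℝ≥0∞))⁻¹ ≠ ⊤ := ENNReal.inv_ne_top.2 (by exact_mod_cast hN.ne')
  have hwm : Measurable (wfun α) := (measurable_rpow_const (α-1)).ennreal_ofReal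
  have hwt : ∀ t : ℝ, wfun α t ≠ ⊤ := fun t => ENNReal.ofReal_ne_top
  have hGmeas : Measurable fun p : Ω × ℝ => Gfun d N μ (fun i => X i p.1) ε p.2 := by
    simp only [Gfun, empDiff, empEvol, measEvol]
    apply Measurable.lintegral_prod_right' (f := fun q : (Ω × ℝ) × Esp d =>
      ENNReal.ofReal ((((N:ℝ)⁻¹ * ∑ i, heatK d (q.1.2 + ε) (q.2 - X i q.1.1))
        - ∫ y, heatK d (q.1.2 + ε) (q.2 - y) ∂μ) ^ 2))
    apply Measurable.ennreal_ofReal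
    apply Measurable.pow_const
    apply Measurable.sub
    · apply Measurable.const_mul
      apply Finset.measurable_sum
      intro i _
      exact (measurable_heatK_prod d).comp
        ((measurable_fst.snd.add_const ε).prodMk
          (measurable_snd.sub ((hXm i).comp measurable_fst.fst)))
    · exact (measurable_measEvol_prod d μ ε).comp (measurable_fst.snd.prodMk measurable_snd)
  have h1 : AEMeasurable
      (Function.uncurry fun ω t => wfun α t * Gfun d N μ (fun i => X i ω) ε t)
      (P.prod (volume.restrict (Set.Ioc (0:ℝ) 1))) :=
    ((hwm.comp measurable_snd).mul hGmeas).aemeasurable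
  rw [lintegral_lintegral_swap h1]
  calc ∫⁻ t in Set.Ioc (0:ℝ) 1, (∫⁻ ω, wfun α t * Gfun d N μ (fun i => X i ω) ε t ∂P)
      = ∫⁻ t in Set.Ioc (0:ℝ) 1,
          (N:ℝ≥0∞)⁻¹ * (wfun α t * Qfun d ε t - wfun α t * Mfun d μ ε t) := by
        apply setLIntegral_congr_fun measurableSet_Ioc
        intro t ht
        dsimp only
        rw [lintegral_const_mul' _ _ (hwt t),
          (keyA d hN μ Ω P X hXm hXlaw hXind ε hε ht.1).1, mul_left_comm]
        congr 1
        exact ENNReal.mul_sub (fun _ _ => hwt t)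
    _ = (N:ℝ≥0∞)⁻¹ * ∫⁻ t in Set.Ioc (0:ℝ) 1,
          (wfun α t * Qfun d ε t - wfun α t * Mfun d μ ε t) :=
        lintegral_const_mul' _ _ hNtop
    _ = _ := by
        congr 1
        apply lintegral_sub (hwm.mul (Mfun_measurable d μ ε)) hB
        refine (ae_restrict_iff' measurableSet_Ioc).2 (ae_of_all _ fun t ht => ?_)
        exact mul_le_mul_right (keyA d hN μ Ω P X hXm hXlaw hXind ε hε ht.1).2 _

/-! ### Remaining ingredients -/

lemma sq_hNorm (d : ℕ) (α : ℝ) (u : ℝ → Esp d → ℝ) :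
    hNorm d α u ^ 2 = ∫⁻ t in Set.Ioc (0:ℝ) 1, ENNReal.ofReal (t ^ (α - 1)) *
      ∫⁻ x, ENNReal.ofReal ((u t x) ^ 2) := by
  rw [hNorm, ← ENNReal.rpow_natCast _ 2, ← ENNReal.rpow_mul]
  norm_num

lemma lintegral_wfun_ne_top {α : ℝ} (hα : 0 < α) :
    (∫⁻ t in Set.Ioc (0:ℝ) 1, wfun α t) ≠ ⊤ := by
  have h : IntegrableOn (fun t : ℝ => t ^ (α - 1)) (Set.Ioo (0:ℝ) 1) :=
    (intervalIntegral.integrableOn_Ioo_rpow_iff one_pos).2 (by linarith)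
  have h2 : (∫⁻ t in Set.Ioo (0:ℝ) 1, wfun α t) < ⊤ := h.lintegral_lt_top
  rw [← setLIntegral_congr (Ioo_ae_eq_Ioc (a := (0:ℝ)) (b := (1:ℝ)))]
  exact h2.ne

lemma Mfun_le_bound (d : ℕ) (μ : Measure (Esp d)) [IsProbabilityMeasure μ]
    {ε t : ℝ} (hs : 0 < t + ε) :
    Mfun d μ ε t ≤ ENNReal.ofReal ((4 * π * (t+ε)) ^ (-(d:ℝ)/2)) := by
  set C : ℝ := (4 * π * (t+ε)) ^ (-(d:ℝ)/2) with hCdef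
  have hC : 0 < C := Real.rpow_pos_of_pos (by positivity) _
  have hk := measurable_heatK d (t+ε)
  have habs : ∀ z : Esp d, |heatK d (t+ε) z| ≤ C := fun z => heatK_abs_le hs z
  have hgm : ∀ x : Esp d, Measurable fun y : Esp d => heatK d (t+ε) (x - y) :=
    fun x => hk.comp (measurable_const.sub measurable_id)
  have hgint : ∀ x, Integrable (fun y => heatK d (t+ε) (x-y)) μ :=
    fun x => integrable_of_bound μ (hgm x).aestronglyMeasurable C (fun y => habs _)
  have hmnn : ∀ x : Esp d, 0 ≤ ∫ y, heatK d (t+ε) (x-y) ∂μ := fun x =>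
    integral_nonneg fun y => (heatK_pos hs _).le
  have hmle : ∀ x : Esp d, ∫ y, heatK d (t+ε) (x-y) ∂μ ≤ C := by
    intro x
    calc ∫ y, heatK d (t+ε) (x-y) ∂μ ≤ ∫ _, C ∂μ :=
          integral_mono (hgint x) (integrable_const C) (fun y => (le_abs_self _).trans (habs _))
      _ = C := by simp
  have hmint : ∫⁻ x, ENNReal.ofReal (∫ y, heatK d (t+ε) (x-y) ∂μ) = 1 := by
    have h1 : ∀ x : Esp d, ENNReal.ofReal (∫ y, heatK d (t+ε) (x-y) ∂μ)
        = ∫⁻ y, ENNReal.ofReal (heatK d (t+ε) (x-y)) ∂μ := fun x =>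
      ofReal_integral_eq_lintegral_ofReal (hgint x) (ae_of_all _ fun y => (heatK_pos hs _).le)
    simp_rw [h1]
    rw [lintegral_lintegral_swap]
    · simp_rw [lintegral_sub_right_eq_self (fun z : Esp d => ENNReal.ofReal (heatK d (t+ε) z)) _,
        lintegral_heatK hs]
      simp
    · exact ((hk.comp (measurable_fst.sub measurable_snd)).ennreal_ofReal).aemeasurable
  have hle : Mfun d μ ε t ≤ ENNReal.ofReal C * 1 := by
    rw [show Mfun d μ ε t
        = ∫⁻ x, ENNReal.ofReal ((∫ y, heatK d (t+ε) (x-y) ∂μ)^2) from rfl,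
      ← hmint, ← lintegral_const_mul' _ _ ENNReal.ofReal_ne_top]
    apply lintegral_mono
    intro x
    dsimp only
    rw [← ENNReal.ofReal_mul hC.le]
    apply ENNReal.ofReal_le_ofReal
    rw [sq]
    exact mul_le_mul_of_nonneg_right (hmle x) (hmnn x)
  simpa using hle

/-- Exact second moment identity in `H^{-α}`, for `ε > 0` and also for `ε = 0`
when `α > d/2` and `μ ∈ H^{-α}`. -/
theorem empirical_measure_exact_second_moment_H
    (d : ℕ) (hd : 1 ≤ d) (α : ℝ) (hα : 0 < α)
    (μ : Measure (Esp d)) [IsProbabilityMeasure μ]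
    (N : ℕ) (hN : 0 < N)
    (Ω : Type) [MeasurableSpace Ω] (P : Measure Ω) [IsProbabilityMeasure P]
    (X : Fin N → Ω → Esp d)
    (hXm : ∀ i, Measurable (X i))
    (hXlaw : ∀ i, Measure.map (X i) P = μ)
    (hXind : iIndepFun X P) :
    (∀ ε : ℝ, 0 < ε →
      (∫⁻ ω, hNorm d α (empDiff d N μ (fun i => X i ω) ε) ^ 2 ∂P) =
        (N : ℝ≥0∞)⁻¹ * (hNorm d α (phiEvol d ε) ^ 2 - hNorm d α (measEvol d μ ε) ^ 2)) ∧
    ((d : ℝ) / 2 < α → hNorm d α (measEvol d μ 0) ≠ ⊤ →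
      (∫⁻ ω, hNorm d α (empDiff d N μ (fun i => X i ω) 0) ^ 2 ∂P) =
        (N : ℝ≥0∞)⁻¹ * (hNorm d α (phiEvol d 0) ^ 2 - hNorm d α (measEvol d μ 0) ^ 2)) := by
  constructor
  · intro ε hε
    have hC : (0:ℝ) < 4 * π * ε := by positivity
    have hexp : -(d:ℝ)/2 ≤ 0 :=
      div_nonpos_of_nonpos_of_nonneg (neg_nonpos.2 (Nat.cast_nonneg d)) (by norm_num)
    have hB : (∫⁻ t in Set.Ioc (0:ℝ) 1, wfun α t * Mfun d μ ε t) ≠ ⊤ := by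
      have hbd : ∀ t ∈ Set.Ioc (0:ℝ) 1, wfun α t * Mfun d μ ε t
          ≤ ENNReal.ofReal ((4*π*ε) ^ (-(d:ℝ)/2)) * wfun α t := by
        intro t ht
        calc wfun α t * Mfun d μ ε t
            ≤ wfun α t * ENNReal.ofReal ((4*π*ε) ^ (-(d:ℝ)/2)) := by
              apply mul_le_mul_right
              refine (Mfun_le_bound d μ (by linarith [ht.1] : (0:ℝ) < t + ε)).trans ?_
              apply ENNReal.ofReal_le_ofReal
              apply Real.rpow_le_rpow_of_nonpos hC ?_ hexp
              have := ht.1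
              nlinarith [Real.pi_pos]
          _ = _ := mul_comm _ _
      have hle : (∫⁻ t in Set.Ioc (0:ℝ) 1, wfun α t * Mfun d μ ε t)
          ≤ ENNReal.ofReal ((4*π*ε) ^ (-(d:ℝ)/2)) * ∫⁻ t in Set.Ioc (0:ℝ) 1, wfun α t := by
        rw [← lintegral_const_mul' _ _ ENNReal.ofReal_ne_top]
        exact lintegral_mono_ae ((ae_restrict_iff' measurableSet_Ioc).2 (ae_of_all _ hbd))
      exact ne_top_of_le_ne_top
        (ENNReal.mul_ne_top ENNReal.ofReal_ne_top (lintegral_wfun_ne_top hα)) hle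
    have hcore := core d hN α μ Ω P X hXm hXlaw hXind ε hε.le hB
    simp only [sq_hNorm]
    exact hcore
  · intro hα2 hT
    have hB : (∫⁻ t in Set.Ioc (0:ℝ) 1, wfun α t * Mfun d μ 0 t) ≠ ⊤ := by
      intro h
      apply hT
      have heq : hNorm d α (measEvol d μ 0)
          = (∫⁻ t in Set.Ioc (0:ℝ) 1, wfun α t * Mfun d μ 0 t) ^ ((1:ℝ)/2) := rfl
      rw [heq, h]
      exact ENNReal.top_rpow_of_pos (by norm_num)
    have hcore := core d hN α μ Ω P X hXm hXlaw hXind 0 le_rfl hB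
    simp only [sq_hNorm]
    exact hcore

end
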